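/- Let f be complex analytic on a neighborhood of (0,0) ∈ ℂ × ℂ and let α : ℂ → ℂ be analytic near 0 with α(0) = 0. Assume the functions y ↦ f_x(α(y), y) and y ↦ f_y(α(y), y) do not both vanish identically near 0, and let L ∈ ℕ be the minimum of their vanishing orders at 0. Then for every function β : ℂ → ℂ analytic near 0 with β(0) = 0 such that the vanishing order at 0 of β − α is strictly greater than L, one has min( ord₀(y ↦ f_x(β(y), y)), ord₀(y ↦ f_y(β(y), y)) ) = L. (Hence the order of the gradient of f along an arc is unchanged by adding any higher order terms of order > L, which is the key step showing that the two definitions of the contact degree d_cont and d̃_cont coincide.) -/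

import Mathlib

open Filter

/-- The vanishing order at `0` of a function `u : ℂ → ℂ`: the least `n` such that the
`n`-th Taylor coefficient of `u` at `0` is nonzero, in `ℕ∞` (`⊤` if none is). -/
noncomputable def ord₀ (u : ℂ → ℂ) : ℕ∞ :=
  sInf ((fun n : ℕ => (n : ℕ∞)) '' {n : ℕ | iteratedDeriv n u 0 ≠ 0})

open Topology Asymptotics Nat

/-- The order `ord₀` (defined via iterated derivatives) agrees with `AnalyticAt.order`. -/
lemma ord₀_eq_order {u : ℂ → ℂ} (hu : AnalyticAt ℂ u 0) : ord₀ u = analyticOrderAt u 0 := by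
  obtain ⟨p, hp⟩ := id hu
  have hcoeff : ∀ n, iteratedDeriv n u 0 = (n ! : ℂ) * p.coeff n := by
    intro n
    obtain ⟨r, hr⟩ := hp
    have h1 := hr.factorial_smul (1 : ℂ) n
    rw [iteratedDeriv_eq_iteratedFDeriv, ← h1, FormalMultilinearSeries.coeff, nsmul_eq_mul]
    norm_num
  have hset : {n : ℕ | iteratedDeriv n u 0 ≠ 0} = {n : ℕ | p n ≠ 0} := by
    ext n
    simp only [Set.mem_setOf_eq, hcoeff n, mul_ne_zero_iff, ne_eq,
      FormalMultilinearSeries.coeff_eq_zero.not]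
    constructor
    · exact fun h => h.2
    · exact fun h => ⟨by exact_mod_cast Nat.factorial_ne_zero n, h⟩
  by_cases h : ∀ᶠ z in 𝓝 (0 : ℂ), u z = 0
  · rw [analyticOrderAt_eq_top.mpr h]
    have hp0 : p = 0 := hp.locally_zero_iff.mp h
    unfold ord₀
    rw [hset, hp0]
    simp
  · have hp0 : p ≠ 0 := fun h' => h (hp.locally_zero_iff.mpr h')
    have horder : analyticOrderAt u 0 = (p.order : ℕ∞) := by
      rw [hu.analyticOrderAt_eq_natCast]
      refine ⟨_, ⟨_, hp.has_fpower_series_iterate_dslope_fslope p.order⟩,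
        hp.iterate_dslope_fslope_ne_zero hp0, by simpa using Filter.Eventually.of_forall hp.eq_pow_order_mul_iterate_dslope⟩
    rw [horder]
    unfold ord₀
    rw [hset]
    apply le_antisymm
    · exact sInf_le ⟨p.order, FormalMultilinearSeries.apply_order_ne_zero hp0, rfl⟩
    · refine le_sInf ?_
      rintro a ⟨n, hn, rfl⟩
      simp only [Nat.cast_le]
      exact Nat.sInf_le hn

lemma isBigO_of_le_order {u : ℂ → ℂ} (hu : AnalyticAt ℂ u 0) {n : ℕ}
    (hn : (n : ℕ∞) ≤ analyticOrderAt u 0) : u =O[𝓝 (0:ℂ)] fun z => z ^ n := by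
  have h1 : ∀ᶠ z : ℂ in 𝓝 0, ‖z‖ ≤ 1 := by
    filter_upwards [Metric.closedBall_mem_nhds (0:ℂ) one_pos] with z hz
    simpa [Metric.mem_closedBall] using hz
  rcases eq_or_ne (analyticOrderAt u 0) ⊤ with h | h
  · have hz := analyticOrderAt_eq_top.mp h
    rw [isBigO_iff]
    exact ⟨1, by filter_upwards [hz] with z hz'; simp [hz']⟩
  · obtain ⟨m, hm⟩ : ∃ m : ℕ, analyticOrderAt u 0 = m := ⟨(analyticOrderAt u 0).toNat, (ENat.coe_toNat h).symm⟩
    have hmn : n ≤ m := by rw [hm] at hn; exact_mod_cast hn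
    obtain ⟨g, hg, hg0, hfg⟩ := (hu.analyticOrderAt_eq_natCast (n := m)).mp hm
    have hgb : ∀ᶠ z : ℂ in 𝓝 0, ‖g z‖ < ‖g 0‖ + 1 :=
      hg.continuousAt.norm.eventually_lt_const (by linarith [norm_nonneg (g 0)])
    rw [isBigO_iff]
    refine ⟨‖g 0‖ + 1, ?_⟩
    filter_upwards [hfg, hgb, h1] with z hz hb hle
    rw [hz, sub_zero, smul_eq_mul, norm_mul, norm_pow, norm_pow]
    calc ‖z‖ ^ m * ‖g z‖ ≤ ‖z‖ ^ n * (‖g 0‖ + 1) := by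
          apply mul_le_mul (pow_le_pow_of_le_one (norm_nonneg _) hle hmn) hb.le
            (norm_nonneg _) (pow_nonneg (norm_nonneg _) _)
      _ = (‖g 0‖ + 1) * ‖z‖ ^ n := mul_comm _ _

lemma le_order_of_isBigO {u : ℂ → ℂ} (hu : AnalyticAt ℂ u 0) {n : ℕ}
    (hO : u =O[𝓝 (0:ℂ)] fun z => z ^ n) : (n : ℕ∞) ≤ analyticOrderAt u 0 := by
  by_contra hlt
  push_neg at hlt
  have h : analyticOrderAt u 0 ≠ ⊤ := (hlt.trans_le le_top).ne
  obtain ⟨m, hm⟩ : ∃ m : ℕ, analyticOrderAt u 0 = m := ⟨(analyticOrderAt u 0).toNat, (ENat.coe_toNat h).symm⟩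
  have hmn : m < n := by rw [hm] at hlt; exact_mod_cast hlt
  obtain ⟨g, hg, hg0, hfg⟩ := (hu.analyticOrderAt_eq_natCast (n := m)).mp hm
  obtain ⟨C, hC⟩ := hO.bound
  have key : ∀ᶠ z in 𝓝[≠] (0:ℂ), ‖g z‖ ≤ C * ‖z‖ ^ (n - m) := by
    filter_upwards [self_mem_nhdsWithin, hfg.filter_mono nhdsWithin_le_nhds,
      hC.filter_mono nhdsWithin_le_nhds] with z hz hz2 hz3
    have hz0 : (0:ℝ) < ‖z‖ ^ m := pow_pos (norm_pos_iff.mpr hz) m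
    rw [hz2, sub_zero, smul_eq_mul, norm_mul, norm_pow] at hz3
    have hsplit : ‖z‖ ^ n = ‖z‖ ^ (n - m) * ‖z‖ ^ m := by
      rw [← pow_add]; congr 1; omega
    rw [norm_pow, hsplit] at hz3
    have h2 : ‖g z‖ * ‖z‖ ^ m ≤ (C * ‖z‖ ^ (n - m)) * ‖z‖ ^ m := by
      calc ‖g z‖ * ‖z‖ ^ m = ‖z‖ ^ m * ‖g z‖ := mul_comm _ _
        _ ≤ C * (‖z‖ ^ (n - m) * ‖z‖ ^ m) := hz3
        _ = (C * ‖z‖ ^ (n - m)) * ‖z‖ ^ m := by ring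
    exact le_of_mul_le_mul_right h2 hz0
  have ht : Tendsto (fun z : ℂ => C * ‖z‖ ^ (n - m)) (𝓝[≠] (0:ℂ)) (𝓝 0) := by
    have hcont : Tendsto (fun z : ℂ => C * ‖z‖ ^ (n - m)) (𝓝 (0:ℂ))
        (𝓝 (C * ‖(0:ℂ)‖ ^ (n - m))) :=
      (continuous_const.mul (continuous_norm.pow _)).continuousAt
    have h0 : C * ‖(0:ℂ)‖ ^ (n - m) = 0 := by
      rw [norm_zero, zero_pow (by omega : n - m ≠ 0), mul_zero]
    exact (h0 ▸ hcont).mono_left nhdsWithin_le_nhds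
  have hg_tendsto : Tendsto g (𝓝[≠] (0:ℂ)) (𝓝 0) := squeeze_zero_norm' key ht
  have hg_tendsto' : Tendsto g (𝓝[≠] (0:ℂ)) (𝓝 (g 0)) :=
    hg.continuousAt.continuousWithinAt
  exact hg0 (tendsto_nhds_unique hg_tendsto' hg_tendsto)

lemma le_ord₀_iff {u : ℂ → ℂ} (hu : AnalyticAt ℂ u 0) (n : ℕ) :
    (n : ℕ∞) ≤ ord₀ u ↔ u =O[𝓝 (0:ℂ)] fun z => z ^ n := by
  rw [ord₀_eq_order hu]
  exact ⟨isBigO_of_le_order hu, le_order_of_isBigO hu⟩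

lemma analytic_deriv_eval {f : ℂ × ℂ → ℂ} (hf : AnalyticAt ℂ f (0,0)) (v : ℂ × ℂ) :
    AnalyticAt ℂ (fun p => fderiv ℂ f p v) (0,0) := by
  have h1 : AnalyticAt ℂ (fderiv ℂ f) (0,0) := hf.fderiv
  exact ((ContinuousLinearMap.apply ℂ ℂ v).analyticAt (fderiv ℂ f (0,0))).comp h1

lemma analytic_curve {γ : ℂ → ℂ} (hγ : AnalyticAt ℂ γ 0) :
    AnalyticAt ℂ (fun y => (γ y, y)) 0 :=
  hγ.prod analyticAt_id

lemma analytic_comp_curve {F : ℂ × ℂ → ℂ} (hF : AnalyticAt ℂ F (0,0))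
    {γ : ℂ → ℂ} (hγ : AnalyticAt ℂ γ 0) (hγ0 : γ 0 = 0) :
    AnalyticAt ℂ (fun y => F (γ y, y)) 0 :=
  hF.comp_of_eq (analytic_curve hγ) (by rw [hγ0])

lemma key_bigO {F : ℂ × ℂ → ℂ} (hF : AnalyticAt ℂ F (0,0))
    {α β : ℂ → ℂ} (hα : AnalyticAt ℂ α 0) (hα0 : α 0 = 0)
    (hβ : AnalyticAt ℂ β 0) (hβ0 : β 0 = 0) {n : ℕ}
    (hab : (fun y => β y - α y) =O[𝓝 (0:ℂ)] fun z => z ^ n) :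
    (fun y => F (β y, y) - F (α y, y)) =O[𝓝 (0:ℂ)] fun z => z ^ n := by
  have hcd : ContDiffAt ℂ 1 F (0,0) := hF.contDiffAt
  obtain ⟨K, t, ht, hK⟩ := hcd.exists_lipschitzOnWith
  have hmem : ∀ (γ : ℂ → ℂ), AnalyticAt ℂ γ 0 → γ 0 = 0 →
      ∀ᶠ y in 𝓝 (0:ℂ), ((γ y : ℂ), y) ∈ t := by
    intro γ hγ hγ0
    have hc : ContinuousAt (fun y : ℂ => ((γ y : ℂ), y)) 0 :=
      hγ.continuousAt.prodMk continuousAt_id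
    have h0 : ((γ 0 : ℂ), (0:ℂ)) = ((0:ℂ), (0:ℂ)) := by rw [hγ0]
    have hc' : Filter.Tendsto (fun y : ℂ => ((γ y : ℂ), y)) (𝓝 0) (𝓝 ((0:ℂ),(0:ℂ))) := by
      rw [← h0]; exact hc
    exact hc' ht
  have hbd : (fun y => F (β y, y) - F (α y, y)) =O[𝓝 (0:ℂ)] fun y => β y - α y := by
    rw [isBigO_iff]
    refine ⟨K, ?_⟩
    filter_upwards [hmem α hα hα0, hmem β hβ hβ0] with y h1 h2
    have hd := hK.dist_le_mul _ h2 _ h1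
    rw [dist_eq_norm] at hd
    refine hd.trans ?_
    have hdist : dist ((β y : ℂ), y) ((α y : ℂ), y) = ‖β y - α y‖ := by
      rw [Prod.dist_eq]
      simp [dist_eq_norm]
    rw [hdist]
  exact hbd.trans hab

/-- Let `f` be analytic near `(0,0)` and `α` analytic near `0` with
`α(0)=0`, such that `y ↦ f_x(α(y),y)` and `y ↦ f_y(α(y),y)` do not both vanish
identically near `0`; let `L` be the minimum of their vanishing orders at `0`. Then for
every arc `β` analytic near `0` with `β(0)=0` and `ord₀(β−α) > L`, the minimum of the
vanishing orders of `y ↦ f_x(β(y),y)` and `y ↦ f_y(β(y),y)` equals `L`: the gradient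
order is unchanged by adding higher order terms of order `> L`. -/
theorem gradient_order_invariant_under_higher_order_terms
    (f : ℂ × ℂ → ℂ) (hf : AnalyticAt ℂ f (0, 0))
    (α : ℂ → ℂ) (hα : AnalyticAt ℂ α 0) (hα0 : α 0 = 0)
    (hne : ¬ ((∀ᶠ y in nhds (0 : ℂ), fderiv ℂ f (α y, y) (1, 0) = 0) ∧
              (∀ᶠ y in nhds (0 : ℂ), fderiv ℂ f (α y, y) (0, 1) = 0)))
    (L : ℕ)
    (hL : min (ord₀ (fun y => fderiv ℂ f (α y, y) (1, 0)))
              (ord₀ (fun y => fderiv ℂ f (α y, y) (0, 1))) = (L : ℕ∞)) :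
    ∀ β : ℂ → ℂ, AnalyticAt ℂ β 0 → β 0 = 0 →
      (L : ℕ∞) < ord₀ (fun y => β y - α y) →
      min (ord₀ (fun y => fderiv ℂ f (β y, y) (1, 0)))
          (ord₀ (fun y => fderiv ℂ f (β y, y) (0, 1))) = (L : ℕ∞) := by
  intro β hβ hβ0 hord
  have hF1 : AnalyticAt ℂ (fun p : ℂ × ℂ => fderiv ℂ f p (1,0)) (0,0) :=
    analytic_deriv_eval hf _
  have hF2 : AnalyticAt ℂ (fun p : ℂ × ℂ => fderiv ℂ f p (0,1)) (0,0) :=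
    analytic_deriv_eval hf _
  have hu1 : AnalyticAt ℂ (fun y => fderiv ℂ f (α y, y) (1,0)) 0 :=
    analytic_comp_curve hF1 hα hα0
  have hu2 : AnalyticAt ℂ (fun y => fderiv ℂ f (α y, y) (0,1)) 0 :=
    analytic_comp_curve hF2 hα hα0
  have hb1 : AnalyticAt ℂ (fun y => fderiv ℂ f (β y, y) (1,0)) 0 :=
    analytic_comp_curve hF1 hβ hβ0
  have hb2 : AnalyticAt ℂ (fun y => fderiv ℂ f (β y, y) (0,1)) 0 :=
    analytic_comp_curve hF2 hβ hβ0
  have hβα : AnalyticAt ℂ (fun y => β y - α y) 0 := hβ.sub hα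
  have hcast : ((L + 1 : ℕ) : ℕ∞) = (L : ℕ∞) + 1 := by push_cast; rfl
  have hordβα : ((L + 1 : ℕ) : ℕ∞) ≤ ord₀ (fun y => β y - α y) := by
    rw [hcast]; exact Order.add_one_le_of_lt hord
  have hOβα := (le_ord₀_iff hβα (L + 1)).mp hordβα
  have hd1 := key_bigO hF1 hα hα0 hβ hβ0 hOβα
  have hd2 := key_bigO hF2 hα hα0 hβ hβ0 hOβα
  have hpow : (fun z : ℂ => z ^ (L + 1)) =O[𝓝 (0:ℂ)] fun z => z ^ L := by
    rw [isBigO_iff]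
    refine ⟨1, ?_⟩
    filter_upwards [Metric.closedBall_mem_nhds (0:ℂ) one_pos] with z hz
    have hz1 : ‖z‖ ≤ 1 := by simpa [Metric.mem_closedBall] using hz
    rw [norm_pow, norm_pow, one_mul]
    exact pow_le_pow_of_le_one (norm_nonneg _) hz1 (by omega)
  have hA1 : (L : ℕ∞) ≤ ord₀ (fun y => fderiv ℂ f (α y, y) (1,0)) :=
    le_trans (le_of_eq hL.symm) (min_le_left _ _)
  have hA2 : (L : ℕ∞) ≤ ord₀ (fun y => fderiv ℂ f (α y, y) (0,1)) :=
    le_trans (le_of_eq hL.symm) (min_le_right _ _)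
  have hOu1 := (le_ord₀_iff hu1 L).mp hA1
  have hOu2 := (le_ord₀_iff hu2 L).mp hA2
  have hOb1 : (fun y => fderiv ℂ f (β y, y) (1,0)) =O[𝓝 (0:ℂ)] fun z => z ^ L := by
    have h := hOu1.add (hd1.trans hpow)
    simpa using h
  have hOb2 : (fun y => fderiv ℂ f (β y, y) (0,1)) =O[𝓝 (0:ℂ)] fun z => z ^ L := by
    have h := hOu2.add (hd2.trans hpow)
    simpa using h
  have hB1 := (le_ord₀_iff hb1 L).mpr hOb1
  have hB2 := (le_ord₀_iff hb2 L).mpr hOb2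
  refine le_antisymm ?_ (le_min hB1 hB2)
  by_contra hgt
  push_neg at hgt
  have hsucc : ((L + 1 : ℕ) : ℕ∞) ≤
      min (ord₀ (fun y => fderiv ℂ f (β y, y) (1, 0)))
          (ord₀ (fun y => fderiv ℂ f (β y, y) (0, 1))) := by
    rw [hcast]; exact Order.add_one_le_of_lt hgt
  have hOb1' := (le_ord₀_iff hb1 (L + 1)).mp (le_min_iff.mp hsucc).1
  have hOb2' := (le_ord₀_iff hb2 (L + 1)).mp (le_min_iff.mp hsucc).2
  have hOu1' : (fun y => fderiv ℂ f (α y, y) (1,0)) =O[𝓝 (0:ℂ)] fun z => z ^ (L + 1) := by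
    have h := hOb1'.sub hd1
    simpa using h
  have hOu2' : (fun y => fderiv ℂ f (α y, y) (0,1)) =O[𝓝 (0:ℂ)] fun z => z ^ (L + 1) := by
    have h := hOb2'.sub hd2
    simpa using h
  have hA1' := (le_ord₀_iff hu1 (L + 1)).mpr hOu1'
  have hA2' := (le_ord₀_iff hu2 (L + 1)).mpr hOu2'
  have hfinal : ((L + 1 : ℕ) : ℕ∞) ≤ (L : ℕ∞) := hL ▸ le_min hA1' hA2'
  have : L + 1 ≤ L := by exact_mod_cast hfinal
  omega
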